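/- Let λ, μ ∈ ℝ with μ > 0 and λ + μ > 0. In EuclideanSpace ℝ (Fin 2), let gᵢ⁺ := (−1, −1/√3), gⱼ⁺ := (1, −1/√3), gᵢ⁻ := (−1, 1/√3), gⱼ⁻ := (1, 1/√3), and t := √3/4. Define the 2×2 matrices S and K by S k l := t·((gⱼ⁺)_k·(gᵢ⁺)_l + (gⱼ⁻)_k·(gᵢ⁻)_l), γ := t·(⟪gⱼ⁺, gᵢ⁺⟫ + ⟪gⱼ⁻, gᵢ⁻⟫), and K k l := −λ·S l k − μ·S k l − (if k = l then μ·γ else 0). Then K is positive-definite if and only if λ < μ (equivalently, if and only if ν := λ/(2(λ+μ)) < 1/4). -/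

import Mathlib

set_option maxHeartbeats 1000000


open RealInnerProductSpace Matrix

theorem stmt_13 (lam mu : ℝ) (hmu : 0 < mu) (hlm : 0 < lam + mu)
    (gip gjp gim gjm : EuclideanSpace ℝ (Fin 2))
    (hgip : gip = ![-1, -1 / Real.sqrt 3]) (hgjp : gjp = ![1, -1 / Real.sqrt 3])
    (hgim : gim = ![-1, 1 / Real.sqrt 3]) (hgjm : gjm = ![1, 1 / Real.sqrt 3])
    (t : ℝ) (ht : t = Real.sqrt 3 / 4)
    (S : Matrix (Fin 2) (Fin 2) ℝ)
    (hS : ∀ k l : Fin 2, S k l = t * (gjp k * gip l + gjm k * gim l))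
    (γ : ℝ) (hγ : γ = t * (⟪gjp, gip⟫ + ⟪gjm, gim⟫))
    (K : Matrix (Fin 2) (Fin 2) ℝ)
    (hK : ∀ k l : Fin 2,
      K k l = -lam * S l k - mu * S k l - (if k = l then mu * γ else 0)) :
    (K.PosDef ↔ lam < mu) ∧ (lam < mu ↔ lam / (2 * (lam + mu)) < 1 / 4) := by
  have hs : Real.sqrt 3 ^ 2 = 3 := Real.sq_sqrt (by norm_num)
  have hs0 : (0:ℝ) < Real.sqrt 3 := Real.sqrt_pos.mpr (by norm_num)
  have hs3 : Real.sqrt 3 ≠ 0 := ne_of_gt hs0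
  have hγ' : γ = -Real.sqrt 3 / 3 := by
    rw [hγ, ht]
    simp [PiLp.inner_apply, Fin.sum_univ_two, hgjp, hgip, hgjm, hgim]
    field_simp
    nlinarith [hs]
  have hKd : K = Matrix.diagonal ![Real.sqrt 3 * (3*lam + 5*mu) / 6,
      Real.sqrt 3 * (mu - lam) / 6] := by
    ext k l
    fin_cases k <;> fin_cases l <;>
      simp [hK, hS, hγ', ht, hgjp, hgip, hgjm, hgim, Matrix.diagonal] <;>
      field_simp <;> nlinarith [hs]
  constructor
  · rw [hKd, Matrix.posDef_diagonal_iff]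
    simp only [Fin.forall_fin_two, Matrix.cons_val_zero, Matrix.cons_val_one, Matrix.head_cons]
    constructor
    · rintro ⟨-, h⟩
      nlinarith
    · intro h
      constructor <;> nlinarith
  · rw [div_lt_div_iff₀ (by linarith) (by norm_num)]
    constructor <;> intro h <;> nlinarith
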